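/- If z is a relative equilibrium in the normalized space (c = 0, I(z) = 1), then M^{-1}D²H(z)·z = L·z; i.e., z itself is an eigenvector of M^{-1}D²H(z) with eigenvalue L. -/

import Mathlib

open Finset RealInnerProductSpace


noncomputable def Pm (n : ℕ) (i j : Fin n) :
    (Fin n → EuclideanSpace ℝ (Fin 2)) →L[ℝ] EuclideanSpace ℝ (Fin 2) :=
  (ContinuousLinearMap.proj i : (Fin n → EuclideanSpace ℝ (Fin 2)) →L[ℝ] _)
    - ContinuousLinearMap.proj j

lemma hasFDerivAt_normsq (n : ℕ) (i j : Fin n) (w : Fin n → EuclideanSpace ℝ (Fin 2)) :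
    HasFDerivAt (fun w : Fin n → EuclideanSpace ℝ (Fin 2) => ‖w i - w j‖^2)
      (2 • (innerSL ℝ (w i - w j)).comp (Pm n i j)) w := by
  have h2 := ((Pm n i j).hasFDerivAt (x := w)).norm_sq
  rw [show (fun x => ‖(Pm n i j) x‖^2) = fun w : Fin n → EuclideanSpace ℝ (Fin 2) => ‖w i - w j‖^2 from rfl] at h2
  rw [show Pm n i j w = w i - w j from rfl] at h2
  exact h2

lemma hasFDerivAt_logterm (n : ℕ) (i j : Fin n) (c : ℝ) (w : Fin n → EuclideanSpace ℝ (Fin 2))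
    (hw : w i ≠ w j) :
    HasFDerivAt (fun w : Fin n → EuclideanSpace ℝ (Fin 2) => c * Real.log ‖w i - w j‖)
      ((c/2) • ((‖w i - w j‖^2)⁻¹ • (2 • (innerSL ℝ (w i - w j)).comp (Pm n i j)))) w := by
  have hne : ‖w i - w j‖^2 ≠ 0 := by
    have : w i - w j ≠ 0 := sub_ne_zero.mpr hw
    exact pow_ne_zero _ (norm_ne_zero_iff.mpr this)
  have hlog := ((hasFDerivAt_normsq n i j w).log hne).const_mul (c/2)
  have heq : (fun w : Fin n → EuclideanSpace ℝ (Fin 2) => c * Real.log ‖w i - w j‖)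
      = fun w => (c/2) * Real.log (‖w i - w j‖^2) := by
    funext w
    rw [Real.log_pow]
    push_cast; ring
  rw [heq]
  exact hlog

lemma hasFDerivAt_H (n : ℕ) (Γ : Fin n → ℝ) (w : Fin n → EuclideanSpace ℝ (Fin 2))
    (hw : ∀ i j, i ≠ j → w i ≠ w j) :
    HasFDerivAt (fun w : Fin n → EuclideanSpace ℝ (Fin 2) =>
      -∑ i, ∑ j ∈ Finset.univ.filter (fun j => i < j), Γ i * Γ j * Real.log ‖w i - w j‖)
      (-∑ i, ∑ j ∈ Finset.univ.filter (fun j => i < j),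
        (Γ i * Γ j/2) • ((‖w i - w j‖^2)⁻¹ • (2 • (innerSL ℝ (w i - w j)).comp (Pm n i j)))) w := by
  apply HasFDerivAt.neg
  apply HasFDerivAt.fun_sum
  intro i _
  apply HasFDerivAt.fun_sum
  intro j hj
  simp only [mem_filter] at hj
  exact hasFDerivAt_logterm n i j _ w (hw i j (Fin.ne_of_lt hj.2))

-- evaluation of the derivative
lemma fderiv_H_eval (n : ℕ) (Γ : Fin n → ℝ) (w v : Fin n → EuclideanSpace ℝ (Fin 2))
    (hw : ∀ i j, i ≠ j → w i ≠ w j) :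
    fderiv ℝ (fun w : Fin n → EuclideanSpace ℝ (Fin 2) =>
      -∑ i, ∑ j ∈ Finset.univ.filter (fun j => i < j), Γ i * Γ j * Real.log ‖w i - w j‖) w v
    = -∑ i, ∑ j ∈ Finset.univ.filter (fun j => i < j),
        Γ i * Γ j * (⟪w i - w j, v i - v j⟫ / ‖w i - w j‖^2) := by
  rw [(hasFDerivAt_H n Γ w hw).fderiv]
  simp only [ContinuousLinearMap.neg_apply, ContinuousLinearMap.coe_sum',
    Finset.sum_apply, ContinuousLinearMap.coe_smul', Pi.smul_apply,
    ContinuousLinearMap.coe_comp', Function.comp_apply,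
    innerSL_apply_apply, smul_eq_mul, neg_inj]
  apply Finset.sum_congr rfl
  intro i _
  apply Finset.sum_congr rfl
  intro j _
  rw [show Pm n i j v = v i - v j from rfl]
  ring

lemma quot_deriv (n : ℕ) (i j : Fin n) (a : EuclideanSpace ℝ (Fin 2))
    (z : Fin n → EuclideanSpace ℝ (Fin 2)) (hzij : z i ≠ z j) :
    DifferentiableAt ℝ (fun w : Fin n → EuclideanSpace ℝ (Fin 2) =>
      ⟪w i - w j, a⟫ / ‖w i - w j‖^2) z ∧
    fderiv ℝ (fun w : Fin n → EuclideanSpace ℝ (Fin 2) =>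
      ⟪w i - w j, a⟫ / ‖w i - w j‖^2) z z
      = -(⟪z i - z j, a⟫ / ‖z i - z j‖^2) := by
  have hne : ‖z i - z j‖^2 ≠ 0 :=
    pow_ne_zero _ (norm_ne_zero_iff.mpr (sub_ne_zero.mpr hzij))
  have hN : HasFDerivAt (fun w : Fin n → EuclideanSpace ℝ (Fin 2) => ⟪a, w i - w j⟫)
      ((innerSL ℝ a).comp (Pm n i j)) z :=
    ((innerSL ℝ a).comp (Pm n i j)).hasFDerivAt
  have hDi : HasFDerivAt (fun w : Fin n → EuclideanSpace ℝ (Fin 2) => (‖w i - w j‖^2)⁻¹)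
      ((-((‖z i - z j‖^2) ^ 2)⁻¹) • (2 • (innerSL ℝ (z i - z j)).comp (Pm n i j))) z :=
    (hasDerivAt_inv hne).comp_hasFDerivAt z (hasFDerivAt_normsq n i j z)
  have h : HasFDerivAt (fun w : Fin n → EuclideanSpace ℝ (Fin 2) => ⟪a, w i - w j⟫ * (‖w i - w j‖^2)⁻¹) _ z :=
    hN.mul hDi
  have heq : (fun w : Fin n → EuclideanSpace ℝ (Fin 2) => ⟪w i - w j, a⟫ / ‖w i - w j‖^2)
      = fun w => ⟪a, w i - w j⟫ * (‖w i - w j‖^2)⁻¹ := by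
    funext w
    rw [div_eq_mul_inv, real_inner_comm]
  rw [heq]
  refine ⟨h.differentiableAt, ?_⟩
  rw [h.fderiv]
  simp only [ContinuousLinearMap.add_apply, ContinuousLinearMap.coe_smul', Pi.smul_apply,
    ContinuousLinearMap.coe_comp', Function.comp_apply, innerSL_apply_apply, smul_eq_mul,
    ContinuousLinearMap.smul_apply]
  rw [show Pm n i j z = z i - z j from rfl]
  rw [real_inner_self_eq_norm_sq, real_inner_comm a]
  have hn0 : ‖z i - z j‖ ≠ 0 := norm_ne_zero_iff.mpr (sub_ne_zero.mpr hzij)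
  field_simp
  ring

/-- If `z` is a relative equilibrium in the normalized space (`c = 0`, `I(z) = 1`) with
positive circulations, then `M⁻¹ D²H(z) z = L z`, i.e. `z` is an eigenvector of
`M⁻¹ D²H(z)` with eigenvalue `L`.  Equivalently, for every direction `v`,
`D²H(z)[z, v] = L ⟨Mz, v⟩ = L ∑ᵢ Γᵢ ⟨zᵢ, vᵢ⟩`. -/
theorem modified_hessian_eigenvector_z (n : ℕ) (Γ : Fin n → ℝ) (hΓ : ∀ i, 0 < Γ i)
    (z : Fin n → EuclideanSpace ℝ (Fin 2)) (hz : ∀ i j, i ≠ j → z i ≠ z j)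
    (L : ℝ)
    (hL : L = ∑ i, ∑ j ∈ Finset.univ.filter (fun j => i < j), Γ i * Γ j)
    (hc : ∑ i, Γ i • z i = 0)
    (hnorm : ∑ i, Γ i * ‖z i‖ ^ 2 = 1)
    (H : (Fin n → EuclideanSpace ℝ (Fin 2)) → ℝ)
    (hH : H = fun w =>
      -∑ i, ∑ j ∈ Finset.univ.filter (fun j => i < j),
        Γ i * Γ j * Real.log ‖w i - w j‖)
    (I : (Fin n → EuclideanSpace ℝ (Fin 2)) → ℝ)
    (hI : I = fun w => ∑ i, Γ i * ‖w i‖ ^ 2)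
    (hRE : ∀ v, fderiv ℝ H z v + (L / 2) * fderiv ℝ I z v = 0) :
    ∀ v : Fin n → EuclideanSpace ℝ (Fin 2),
      fderiv ℝ (fun w => fderiv ℝ H w v) z z
        = L * ∑ i, Γ i * (inner ℝ (z i) (v i) : ℝ) := by
  intro v
  subst hH hI
  -- the open set of configurations with distinct points
  set U : Set (Fin n → EuclideanSpace ℝ (Fin 2)) :=
    {w | ∀ i j, i ≠ j → w i ≠ w j} with hU
  have hUopen : IsOpen U := by
    have : U = ⋂ (p : Fin n × Fin n) (_ : p.1 ≠ p.2), {w | w p.1 ≠ w p.2} := by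
      ext w
      simp only [hU, Set.mem_setOf_eq, Set.mem_iInter, Prod.forall]
    rw [this]
    refine isOpen_iInter_of_finite fun p => isOpen_iInter_of_finite fun hp => ?_
    have hcont : Continuous (fun w : Fin n → EuclideanSpace ℝ (Fin 2) => w p.1 - w p.2) :=
      (continuous_apply p.1).sub (continuous_apply p.2)
    have : {w : Fin n → EuclideanSpace ℝ (Fin 2) | w p.1 ≠ w p.2}
        = (fun w : Fin n → EuclideanSpace ℝ (Fin 2) => w p.1 - w p.2) ⁻¹' {(0 : EuclideanSpace ℝ (Fin 2))}ᶜ := by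
      ext w; simp [sub_ne_zero]
    rw [this]
    exact isOpen_compl_singleton.preimage hcont
  have hzU : z ∈ U := hz
  -- the explicit formula for the first derivative in direction v
  set F : (Fin n → EuclideanSpace ℝ (Fin 2)) → ℝ := fun w =>
    -∑ i, ∑ j ∈ Finset.univ.filter (fun j => i < j),
      Γ i * Γ j * (⟪w i - w j, v i - v j⟫ / ‖w i - w j‖^2) with hF
  have hEv : (fun w => fderiv ℝ (fun w =>
      -∑ i, ∑ j ∈ Finset.univ.filter (fun j => i < j),
        Γ i * Γ j * Real.log ‖w i - w j‖) w v) =ᶠ[nhds z] F := by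
    filter_upwards [hUopen.mem_nhds hzU] with w hw
    exact fderiv_H_eval n Γ w v hw
  -- differentiability and value of the second derivative
  have hq : ∀ i j : Fin n, i ≠ j →
      DifferentiableAt ℝ (fun w : Fin n → EuclideanSpace ℝ (Fin 2) =>
        ⟪w i - w j, v i - v j⟫ / ‖w i - w j‖^2) z ∧
      fderiv ℝ (fun w : Fin n → EuclideanSpace ℝ (Fin 2) =>
        ⟪w i - w j, v i - v j⟫ / ‖w i - w j‖^2) z z
        = -(⟪z i - z j, v i - v j⟫ / ‖z i - z j‖^2) :=
    fun i j hij => quot_deriv n i j (v i - v j) z (hz i j hij)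
  have hFd : HasFDerivAt F
      (-∑ i, ∑ j ∈ Finset.univ.filter (fun j => i < j),
        (Γ i * Γ j) • fderiv ℝ (fun w : Fin n → EuclideanSpace ℝ (Fin 2) =>
          ⟪w i - w j, v i - v j⟫ / ‖w i - w j‖^2) z) z := by
    apply HasFDerivAt.neg
    apply HasFDerivAt.fun_sum
    intro i _
    apply HasFDerivAt.fun_sum
    intro j hj
    simp only [mem_filter] at hj
    exact ((hq i j (Fin.ne_of_lt hj.2)).1.hasFDerivAt).const_mul (Γ i * Γ j)
  have hstep : fderiv ℝ (fun w => fderiv ℝ (fun w =>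
      -∑ i, ∑ j ∈ Finset.univ.filter (fun j => i < j),
        Γ i * Γ j * Real.log ‖w i - w j‖) w v) z z = -F z := by
    rw [hEv.fderiv_eq, hFd.fderiv]
    simp only [ContinuousLinearMap.neg_apply, ContinuousLinearMap.coe_sum',
      Finset.sum_apply, ContinuousLinearMap.coe_smul', Pi.smul_apply, smul_eq_mul]
    rw [hF]
    simp only [neg_neg, neg_inj]
    rw [← Finset.sum_neg_distrib]
    apply Finset.sum_congr rfl
    intro i _
    rw [← Finset.sum_neg_distrib]
    apply Finset.sum_congr rfl
    intro j hj
    simp only [mem_filter] at hj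
    rw [(hq i j (Fin.ne_of_lt hj.2)).2]
    ring
  rw [hstep]
  -- first derivative of H at z
  have hHz : fderiv ℝ (fun w : Fin n → EuclideanSpace ℝ (Fin 2) =>
      -∑ i, ∑ j ∈ Finset.univ.filter (fun j => i < j),
        Γ i * Γ j * Real.log ‖w i - w j‖) z v = F z := fderiv_H_eval n Γ z v hz
  -- derivative of I
  have hIdiff : HasFDerivAt (fun w : Fin n → EuclideanSpace ℝ (Fin 2) => ∑ i, Γ i * ‖w i‖ ^ 2)
      (∑ i : Fin n, Γ i • (2 • (innerSL ℝ (z i)).comp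
        (ContinuousLinearMap.proj (R := ℝ) (φ := fun _ : Fin n => EuclideanSpace ℝ (Fin 2)) i))) z := by
    apply HasFDerivAt.fun_sum
    intro i _
    refine HasFDerivAt.const_mul ?_ (Γ i)
    have h2 := ((ContinuousLinearMap.proj (R := ℝ)
      (φ := fun _ : Fin n => EuclideanSpace ℝ (Fin 2)) i).hasFDerivAt (x := z)).norm_sq
    exact h2
  have hIv : fderiv ℝ (fun w : Fin n → EuclideanSpace ℝ (Fin 2) => ∑ i, Γ i * ‖w i‖ ^ 2) z v
      = ∑ i, Γ i * (2 * ⟪z i, v i⟫) := by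
    rw [hIdiff.fderiv, ContinuousLinearMap.sum_apply]
    apply Finset.sum_congr rfl
    intro i _
    simp only [ContinuousLinearMap.smul_apply, ContinuousLinearMap.coe_comp',
      Function.comp_apply, innerSL_apply_apply, ContinuousLinearMap.proj_apply,
      smul_eq_mul, nsmul_eq_mul]
    push_cast
    ring
  have hre := hRE v
  rw [hIv] at hre
  rw [hHz] at hre
  have : -F z = (L/2) * ∑ i, Γ i * (2 * ⟪z i, v i⟫) := by linarith
  rw [this, Finset.mul_sum, Finset.mul_sum]
  apply Finset.sum_congr rfl
  intro i _
  ring
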